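/- Let f : [t₀,∞) → [0,∞) be continuous and define F(x) = (1/x²)·(1/4 + f(log x)) for x ≥ e^{t₀}. Then f is recursively integrable if and only if F is recursively integrable. -/

import Mathlib

/-- `f` is recursively integrable on `[t₀, ∞)`: for some `t₁ ≥ t₀`, the differential
equation `-g′(x) = g(x)² + f(x)` has a nonnegative solution `g` on `[t₁, ∞)`. -/
def RecInt (t₀ : ℝ) (f : ℝ → ℝ) : Prop :=
  ∃ t₁ : ℝ, t₀ ≤ t₁ ∧ ∃ g : ℝ → ℝ, (∀ x, t₁ ≤ x → 0 ≤ g x) ∧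
    ∀ x, t₁ ≤ x → HasDerivWithinAt g (-(g x ^ 2 + f x)) (Set.Ici t₁) x

/-- Any global solution of the Riccati equation with nonnegative `f` is nonnegative. -/
lemma riccati_global_nonneg (t₁ : ℝ) (f g : ℝ → ℝ)
    (hf : ∀ t, t₁ ≤ t → 0 ≤ f t)
    (hg : ∀ t, t₁ ≤ t → HasDerivWithinAt g (-(g t ^ 2 + f t)) (Set.Ici t₁) t) :
    ∀ t, t₁ ≤ t → 0 ≤ g t := by
  by_contra h
  push_neg at h
  obtain ⟨t₂, ht₂, hneg⟩ := h
  -- g is antitone on Ici t₁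
  have hanti : AntitoneOn g (Set.Ici t₁) := by
    apply antitoneOn_of_hasDerivWithinAt_nonpos (convex_Ici t₁)
      (fun x hx => (hg x hx).continuousWithinAt)
      (fun x hx => ((hg x (le_of_lt (by simpa [interior_Ici] using hx))).mono interior_subset))
    intro x hx
    rw [interior_Ici] at hx
    have hfx := hf x (le_of_lt hx)
    nlinarith [sq_nonneg (g x)]
  -- so g < 0 on Ici t₂
  have hneg' : ∀ t, t₂ ≤ t → g t < 0 := fun t ht =>
    lt_of_le_of_lt (hanti ht₂ (le_trans ht₂ ht) ht) hneg
  -- w = g⁻¹ - id is monotone on Ici t₂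
  set w : ℝ → ℝ := fun t => (g t)⁻¹ - t with hw
  have hmono : MonotoneOn w (Set.Ici t₂) := by
    have hderiv : ∀ t, t₂ ≤ t →
        HasDerivWithinAt w ((g t ^ 2 + f t) / (g t) ^ 2 - 1) (Set.Ici t₂) t := by
      intro t ht
      have h1 : HasDerivWithinAt g (-(g t ^ 2 + f t)) (Set.Ici t₂) t :=
        (hg t (le_trans ht₂ ht)).mono (Set.Ici_subset_Ici.2 (le_trans ht₂ le_rfl))
      have h2 := h1.inv (ne_of_lt (hneg' t ht))
      have h3 := h2.sub (hasDerivWithinAt_id t (Set.Ici t₂))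
      convert h3 using 1
      · rfl
      · rfl
      · rfl
      field_simp
    apply monotoneOn_of_hasDerivWithinAt_nonneg (convex_Ici t₂)
      (fun x hx => (hderiv x hx).continuousWithinAt)
      (fun x hx => ((hderiv x (le_of_lt (by simpa [interior_Ici] using hx))).mono
        interior_subset))
    intro x hx
    rw [interior_Ici] at hx
    have hgx := hneg' x (le_of_lt hx)
    have hfx := hf x (le_trans ht₂ (le_of_lt hx))
    have hg2 : (0:ℝ) < (g x) ^ 2 := by nlinarith
    rw [sub_nonneg, le_div_iff₀ hg2]
    nlinarith
  -- derive contradiction at t₃ = t₂ + 1 - (g t₂)⁻¹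
  set t₃ := t₂ + 1 - (g t₂)⁻¹ with ht₃
  have hginv : (g t₂)⁻¹ < 0 := inv_lt_zero.2 hneg
  have ht₂₃ : t₂ ≤ t₃ := by rw [ht₃]; linarith
  have := hmono Set.self_mem_Ici (Set.mem_Ici.2 ht₂₃) ht₂₃
  have hgt₃ : (g t₃)⁻¹ < 0 := inv_lt_zero.2 (hneg' t₃ ht₂₃)
  simp only [hw] at this
  linarith

/-- `f` is recursively integrable iff `F x = (1/x²) * (1/4 + f (log x))` is. -/
theorem recInt_log_transform (t₀ : ℝ) (f : ℝ → ℝ)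
    (hfc : ContinuousOn f (Set.Ici t₀)) (hf0 : ∀ x, t₀ ≤ x → 0 ≤ f x) :
    RecInt t₀ f ↔
      RecInt (Real.exp t₀) (fun x => (1 / x ^ 2) * (1 / 4 + f (Real.log x))) := by
  constructor
  · rintro ⟨t₁, ht₁, g, hg0, hg⟩
    refine ⟨Real.exp t₁, Real.exp_le_exp.2 ht₁,
      fun x => x⁻¹ * (1/2 + g (Real.log x)), ?_, ?_⟩
    · intro x hx
      have hx0 : (0:ℝ) < x := lt_of_lt_of_le (Real.exp_pos t₁) hx
      have hlog : t₁ ≤ Real.log x := by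
        rw [← Real.log_exp t₁]; exact Real.log_le_log (Real.exp_pos t₁) hx
      have := hg0 (Real.log x) hlog
      positivity
    · intro x hx
      have hx0 : (0:ℝ) < x := lt_of_lt_of_le (Real.exp_pos t₁) hx
      have hlog : t₁ ≤ Real.log x := by
        rw [← Real.log_exp t₁]; exact Real.log_le_log (Real.exp_pos t₁) hx
      have hmaps : Set.MapsTo Real.log (Set.Ici (Real.exp t₁)) (Set.Ici t₁) := by
        intro y hy
        have hy0 : (0:ℝ) < y := lt_of_lt_of_le (Real.exp_pos t₁) hy
        rw [Set.mem_Ici, ← Real.log_exp t₁]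
        exact Real.log_le_log (Real.exp_pos t₁) hy
      have h2 : HasDerivWithinAt Real.log x⁻¹ (Set.Ici (Real.exp t₁)) x :=
        (Real.hasDerivAt_log (ne_of_gt hx0)).hasDerivWithinAt
      have h3 : HasDerivWithinAt (fun y => g (Real.log y))
          (-(g (Real.log x) ^ 2 + f (Real.log x)) * x⁻¹) (Set.Ici (Real.exp t₁)) x :=
        (hg (Real.log x) hlog).comp x h2 hmaps
      have h4 : HasDerivWithinAt (fun y => 1/2 + g (Real.log y))
          (-(g (Real.log x) ^ 2 + f (Real.log x)) * x⁻¹) (Set.Ici (Real.exp t₁)) x :=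
        h3.const_add (1/2)
      have h1 : HasDerivWithinAt (fun y : ℝ => y⁻¹) (-(x^2)⁻¹) (Set.Ici (Real.exp t₁)) x :=
        (hasDerivAt_inv (ne_of_gt hx0)).hasDerivWithinAt
      have h5 := h1.mul h4
      convert h5 using 1
      · rfl
      · rfl
      · rfl
      have hx0' : x ≠ 0 := ne_of_gt hx0
      field_simp
      ring
  · rintro ⟨s₁, hs₁, G, hG0, hG⟩
    have hs₁0 : (0:ℝ) < s₁ := lt_of_lt_of_le (Real.exp_pos t₀) hs₁
    set t₁ := Real.log s₁ with ht₁def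
    have ht₁ : t₀ ≤ t₁ := by
      rw [ht₁def, ← Real.log_exp t₀]
      exact Real.log_le_log (Real.exp_pos t₀) hs₁
    set g : ℝ → ℝ := fun t => Real.exp t * G (Real.exp t) - 1/2 with hgdef
    have hmaps : Set.MapsTo Real.exp (Set.Ici t₁) (Set.Ici s₁) := by
      intro y hy
      rw [Set.mem_Ici, ← Real.exp_log hs₁0]
      exact Real.exp_le_exp.2 hy
    have hderiv : ∀ t, t₁ ≤ t →
        HasDerivWithinAt g (-(g t ^ 2 + f t)) (Set.Ici t₁) t := by
      intro t ht
      have hxt : s₁ ≤ Real.exp t := hmaps ht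
      have hxt0 : (0:ℝ) < Real.exp t := Real.exp_pos t
      have h2 : HasDerivWithinAt Real.exp (Real.exp t) (Set.Ici t₁) t :=
        (Real.hasDerivAt_exp t).hasDerivWithinAt
      have h3 : HasDerivWithinAt (fun s => G (Real.exp s))
          (-(G (Real.exp t) ^ 2 + (1 / (Real.exp t) ^ 2) * (1/4 + f (Real.log (Real.exp t))))
            * Real.exp t) (Set.Ici t₁) t :=
        (hG (Real.exp t) hxt).comp t h2 hmaps
      have h5 := h2.mul h3
      have h6 := h5.sub_const (1/2)
      convert h6 using 1
      · rfl
      · rfl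
      · rfl
      rw [Real.log_exp]
      have he : Real.exp t ≠ 0 := ne_of_gt hxt0
      simp only [hgdef]
      field_simp
      ring
    refine ⟨t₁, ht₁, g, ?_, hderiv⟩
    exact riccati_global_nonneg t₁ f g (fun t ht => hf0 t (le_trans ht₁ ht)) hderiv
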